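/- Let N ≥ 1, let v ∈ ℝ^N have all entries in {+1/√N, −1/√N}, let u ∈ ℝ^N be a unit vector with ⟨u, v⟩ = 0, let W ⊆ ℝ^N be a two-dimensional subspace with P_W u ≠ 0, and let w ∈ W be a unit vector with ⟨w, P_W u⟩ = 0 and ⟨w, v⟩ ≥ 0. Then ‖(1/√N)·sgn(w) − v‖ ≤ 2·‖v − P_W v‖ + 4·‖u − P_W u‖, where sgn is applied entrywise with sgn(x) = 1 for x ≥ 0 and sgn(x) = −1 for x < 0, and P_W denotes the orthogonal projection onto W. -/

import Mathlib

open scoped RealInnerProductSpace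

/-- Entrywise sign vector: `sgn(x) = 1` if `x ≥ 0`, and `−1` if `x < 0`. -/
noncomputable def sgnVec {N : ℕ} (x : EuclideanSpace ℝ (Fin N)) : EuclideanSpace ℝ (Fin N) :=
  WithLp.toLp 2 (fun i => if 0 ≤ x i then (1 : ℝ) else -1)

lemma norm_le_of_abs_le {N : ℕ} {x y : EuclideanSpace ℝ (Fin N)}
    (h : ∀ i, |x i| ≤ |y i|) : ‖x‖ ≤ ‖y‖ := by
  rw [EuclideanSpace.norm_eq, EuclideanSpace.norm_eq]
  apply Real.sqrt_le_sqrt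
  apply Finset.sum_le_sum
  intro i _
  simp only [Real.norm_eq_abs]
  exact pow_le_pow_left₀ (abs_nonneg _) (h i) 2

lemma rank_contra {N : ℕ} (W : Submodule ℝ (EuclideanSpace ℝ (Fin N)))
    (hWdim : Module.finrank ℝ W = 2)
    (a b c : EuclideanSpace ℝ (Fin N)) (ha : a ∈ W) (hb : b ∈ W) (hc : c ∈ W)
    (na : ‖a‖ = 1) (nb : ‖b‖ = 1) (nc : ‖c‖ = 1)
    (hab : ⟪a, b⟫ = 0) (hac : ⟪a, c⟫ = 0) (hbc : ⟪b, c⟫ = 0) : False := by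
  set f : Fin 3 → W := ![⟨a, ha⟩, ⟨b, hb⟩, ⟨c, hc⟩] with hf
  have naa : ⟪a, a⟫ = 1 := by rw [real_inner_self_eq_norm_sq, na]; norm_num
  have nbb : ⟪b, b⟫ = 1 := by rw [real_inner_self_eq_norm_sq, nb]; norm_num
  have ncc : ⟪c, c⟫ = 1 := by rw [real_inner_self_eq_norm_sq, nc]; norm_num
  have hba : ⟪b, a⟫ = 0 := by rw [real_inner_comm]; exact hab
  have hca : ⟪c, a⟫ = 0 := by rw [real_inner_comm]; exact hac
  have hcb : ⟪c, b⟫ = 0 := by rw [real_inner_comm]; exact hbc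
  have horth : Orthonormal ℝ f := by
    rw [orthonormal_iff_ite]
    intro i j
    fin_cases i <;> fin_cases j <;>
      simp only [f, Matrix.cons_val_zero, Matrix.cons_val_one, Matrix.head_cons,
        Matrix.cons_val_two, Matrix.tail_cons, Submodule.coe_inner] <;>
      simp [naa, nbb, ncc, hab, hac, hbc, hba, hca, hcb, na, nb, nc]
  have := horth.linearIndependent.fintype_card_le_finrank
  simp [hWdim] at this

lemma endgame (X P Q δ ε a b : ℝ) (hδ0 : 0 ≤ δ) (hε0 : 0 ≤ ε) (hn0 : 0 ≤ X)
    (hawv : X ^ 2 = 1 - a ^ 2) (hPy : P ^ 2 + δ ^ 2 = 1) (hQy : Q ^ 2 + ε ^ 2 = 1)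
    (hPab : P ^ 2 = a ^ 2 + b ^ 2) (hbQ : b ^ 2 * Q ^ 2 ≤ ε ^ 2 * δ ^ 2) :
    X ≤ δ + 2 * ε := by
  have hδle1 : δ ≤ 1 := by nlinarith [sq_nonneg (δ - 1)]
  have hmain : 1 - a ^ 2 ≤ (δ + 2 * ε) ^ 2 := by
    by_cases hc : 1 ≤ δ + 2 * ε
    · nlinarith [sq_nonneg a]
    · push_neg at hc
      have hε12 : ε < 1/2 := by linarith
      have hb4 : b ^ 2 ≤ 4 * ε ^ 2 := by
        nlinarith [sq_nonneg b, sq_nonneg ε, sq_nonneg δ, mul_nonneg hε0 hδ0]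
      nlinarith [mul_nonneg hε0 hδ0]
  nlinarith [hawv, hmain, hδ0, hε0, hn0]


/-- Let `v ∈ ℝ^N` have entries `±1/√N`, `u` a unit vector with `⟨u,v⟩ = 0`,
`W` a two-dimensional subspace with `P_W u ≠ 0`, and `w ∈ W` a unit vector with
`⟨w, P_W u⟩ = 0` and `⟨w, v⟩ ≥ 0`.  Then
`‖(1/√N)·sgn(w) − v‖ ≤ 2·‖v − P_W v‖ + 4·‖u − P_W u‖`. -/
theorem statement_12
    (N : ℕ) (hN : 1 ≤ N)
    (v u : EuclideanSpace ℝ (Fin N))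
    (hv : ∀ i, v i = (Real.sqrt N)⁻¹ ∨ v i = -(Real.sqrt N)⁻¹)
    (hu : ‖u‖ = 1) (huv : ⟪u, v⟫ = 0)
    (W : Submodule ℝ (EuclideanSpace ℝ (Fin N))) (hWdim : Module.finrank ℝ W = 2)
    (hPu : (W.orthogonalProjectionOnto u : EuclideanSpace ℝ (Fin N)) ≠ 0)
    (w : EuclideanSpace ℝ (Fin N)) (hwW : w ∈ W) (hw : ‖w‖ = 1)
    (hwu : ⟪w, (W.orthogonalProjectionOnto u : EuclideanSpace ℝ (Fin N))⟫ = 0)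
    (hwv : 0 ≤ ⟪w, v⟫) :
    ‖(Real.sqrt N)⁻¹ • sgnVec w - v‖ ≤
      2 * ‖v - (W.orthogonalProjectionOnto v : EuclideanSpace ℝ (Fin N))‖ +
        4 * ‖u - (W.orthogonalProjectionOnto u : EuclideanSpace ℝ (Fin N))‖ := by
  have hN0 : (0:ℝ) < N := by exact_mod_cast hN
  have hsN : (0:ℝ) < Real.sqrt N := Real.sqrt_pos.2 hN0
  have hsInv : (0:ℝ) < (Real.sqrt N)⁻¹ := inv_pos.2 hsN
  set p : EuclideanSpace ℝ (Fin N) := (W.orthogonalProjectionOnto v : EuclideanSpace ℝ (Fin N)) with hp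
  set q : EuclideanSpace ℝ (Fin N) := (W.orthogonalProjectionOnto u : EuclideanSpace ℝ (Fin N)) with hq
  set δ := ‖v - p‖ with hδdef
  set ε := ‖u - q‖ with hεdef
  have hδ0 : 0 ≤ δ := norm_nonneg _
  have hε0 : 0 ≤ ε := norm_nonneg _
  set a := ⟪w, v⟫ with ha
  -- v is a unit vector
  have hvnorm : ‖v‖ = 1 := by
    rw [EuclideanSpace.norm_eq]
    have hvsq : ∀ i, ‖v i‖ ^ 2 = (N:ℝ)⁻¹ := by
      intro i
      have hs : Real.sqrt N ^ 2 = N := Real.sq_sqrt hN0.le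
      rw [Real.norm_eq_abs, sq_abs]
      rcases hv i with h | h
      · rw [h, inv_pow, hs]
      · rw [h, neg_sq, inv_pow, hs]
    rw [Finset.sum_congr rfl (fun i _ => hvsq i)]
    simp only [Finset.sum_const, Finset.card_univ, Fintype.card_fin, nsmul_eq_mul]
    rw [mul_inv_cancel₀ (ne_of_gt hN0), Real.sqrt_one]
  -- Step A: pointwise comparison
  have key1 : ‖(Real.sqrt N)⁻¹ • sgnVec w - v‖ ≤ 2 * ‖a • w - v‖ := by
    have h2 : (2:ℝ) * ‖a • w - v‖ = ‖(2:ℝ) • (a • w - v)‖ := by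
      rw [norm_smul]; norm_num
    rw [h2]
    apply norm_le_of_abs_le
    intro i
    have hwi : ((Real.sqrt N)⁻¹ • sgnVec w - v) i = (Real.sqrt N)⁻¹ * sgnVec w i - v i := rfl
    have hyi : ((2:ℝ) • (a • w - v)) i = 2 * (a * w i - v i) := rfl
    rw [hwi, hyi]
    by_cases hw0 : 0 ≤ w i
    · have hs : sgnVec w i = 1 := if_pos hw0
      rcases hv i with h | h
      · rw [hs, h]; simp
      · rw [hs, h]
        have hm : 0 ≤ a * w i := mul_nonneg hwv hw0
        rw [abs_of_nonneg (by linarith), abs_of_nonneg (by linarith)]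
        linarith
    · have hs : sgnVec w i = if 0 ≤ w i then 1 else -1 := rfl
      rw [hs, if_neg hw0]
      push_neg at hw0
      rcases hv i with h | h
      · rw [h]
        have hm : a * w i ≤ 0 := mul_nonpos_of_nonneg_of_nonpos hwv hw0.le
        rw [abs_of_nonpos (by linarith), abs_of_nonpos (by linarith)]
        linarith
      · rw [h]; simp
  -- Step B: norm of a•w - v
  have hww : ⟪w, w⟫ = 1 := by rw [real_inner_self_eq_norm_sq, hw]; norm_num
  have hawv : ‖a • w - v‖ ^ 2 = 1 - a ^ 2 := by
    rw [norm_sub_sq_real, real_inner_smul_left, norm_smul, hw, hvnorm, Real.norm_eq_abs]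
    rw [← ha, mul_one, sq_abs]
    ring
  -- orthogonality facts
  have hmemp : v - p ∈ Wᗮ := W.sub_starProjection_mem_orthogonal v
  have hmemq : u - q ∈ Wᗮ := W.sub_starProjection_mem_orthogonal u
  have hpW : p ∈ W := (W.orthogonalProjectionOnto v).2
  have hqW : q ∈ W := (W.orthogonalProjectionOnto u).2
  have hPy : ‖p‖ ^ 2 + δ ^ 2 = 1 := by
    have h0 : ⟪p, v - p⟫ = 0 := Submodule.inner_right_of_mem_orthogonal hpW hmemp
    have hv1 : ‖p + (v - p)‖ ^ 2 = 1 := by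
      rw [show p + (v - p) = v by abel, hvnorm]; norm_num
    rw [norm_add_sq_real, h0] at hv1
    linarith
  have hQy : ‖q‖ ^ 2 + ε ^ 2 = 1 := by
    have h0 : ⟪q, u - q⟫ = 0 := Submodule.inner_right_of_mem_orthogonal hqW hmemq
    have hu1 : ‖q + (u - q)‖ ^ 2 = 1 := by
      rw [show q + (u - q) = u by abel, hu]; norm_num
    rw [norm_add_sq_real, h0] at hu1
    linarith
  have hwp : ⟪w, p⟫ = a := by
    have h0 : ⟪w, v - p⟫ = 0 := Submodule.inner_right_of_mem_orthogonal hwW hmemp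
    rw [inner_sub_right] at h0
    linarith [h0]
  have hqp : ⟪q, p⟫ = -⟪u - q, v - p⟫ := by
    have h1 : ⟪q, v - p⟫ = 0 := Submodule.inner_right_of_mem_orthogonal hqW hmemp
    have h2 : ⟪u - q, p⟫ = 0 := Submodule.inner_left_of_mem_orthogonal hpW hmemq
    have h3 : ⟪u, v⟫ = ⟪q, p⟫ + ⟪u - q, v - p⟫ := by
      conv_lhs => rw [show u = q + (u - q) by abel, show v = p + (v - p) by abel]
      rw [inner_add_left, inner_add_right, inner_add_right, h1, h2]
      ring
    rw [huv] at h3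
    linarith
  have hqp_bound : |⟪q, p⟫| ≤ ε * δ := by
    rw [hqp, abs_neg]
    exact abs_real_inner_le_norm _ _
  -- normalized q
  have hqne : ‖q‖ ≠ 0 := fun h => hPu (norm_eq_zero.mp h)
  have hqpos : 0 < ‖q‖ := lt_of_le_of_ne (norm_nonneg _) (Ne.symm hqne)
  set qh : EuclideanSpace ℝ (Fin N) := ‖q‖⁻¹ • q with hqh
  have hqhW : qh ∈ W := W.smul_mem _ hqW
  have hqhnorm : ‖qh‖ = 1 := by
    rw [hqh, norm_smul, Real.norm_eq_abs, abs_of_pos (inv_pos.2 hqpos), inv_mul_cancel₀ hqne]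
  have hwqh : ⟪w, qh⟫ = 0 := by
    rw [hqh, real_inner_smul_right, hwu]; ring
  set b := ⟪qh, p⟫ with hb
  have hqhqh : ⟪qh, qh⟫ = 1 := by rw [real_inner_self_eq_norm_sq, hqhnorm]; norm_num
  have hqhw : ⟪qh, w⟫ = 0 := by rw [real_inner_comm]; exact hwqh
  -- b relation to ⟪q,p⟫
  have hbq : b * ‖q‖ = ⟪q, p⟫ := by
    rw [hb, hqh, real_inner_smul_left]
    field_simp
  -- spanning: p = a • w + b • qh
  set r : EuclideanSpace ℝ (Fin N) := p - a • w - b • qh with hr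
  have hrW : r ∈ W := by
    apply Submodule.sub_mem _ (Submodule.sub_mem _ hpW (W.smul_mem _ hwW)) (W.smul_mem _ hqhW)
  have hwr : ⟪w, r⟫ = 0 := by
    rw [hr, inner_sub_right, inner_sub_right, real_inner_smul_right, real_inner_smul_right,
      hww, hwqh, hwp]
    ring
  have hqhr : ⟪qh, r⟫ = 0 := by
    rw [hr, inner_sub_right, inner_sub_right, real_inner_smul_right, real_inner_smul_right,
      hqhqh, hqhw, ← hb]
    ring
  have hr0 : r = 0 := by
    by_contra hrne
    have hrn : ‖r‖ ≠ 0 := fun h => hrne (norm_eq_zero.mp h)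
    have hrpos : 0 < ‖r‖ := lt_of_le_of_ne (norm_nonneg _) (Ne.symm hrn)
    refine rank_contra W hWdim w qh (‖r‖⁻¹ • r) hwW hqhW (W.smul_mem _ hrW) hw hqhnorm ?_
      hwqh ?_ ?_
    · rw [norm_smul, Real.norm_eq_abs, abs_of_pos (inv_pos.2 hrpos), inv_mul_cancel₀ hrn]
    · rw [real_inner_smul_right, hwr]; ring
    · rw [real_inner_smul_right, hqhr]; ring
  have hpeq : p = a • w + b • qh := by
    have h2 : p - (a • w + b • qh) = 0 := by rw [← hr0, hr]; abel
    exact eq_of_sub_eq_zero h2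
  have hPab : ‖p‖ ^ 2 = a ^ 2 + b ^ 2 := by
    rw [hpeq, norm_add_sq_real, real_inner_smul_left, real_inner_smul_right, hwqh,
      norm_smul, norm_smul, Real.norm_eq_abs, Real.norm_eq_abs, hw, hqhnorm]
    rw [mul_one, mul_one, sq_abs, sq_abs]
    ring
  have hbQ : b ^ 2 * ‖q‖ ^ 2 ≤ ε ^ 2 * δ ^ 2 := by
    have h1 : |b * ‖q‖| ≤ ε * δ := by rw [hbq]; exact hqp_bound
    have h2 : (b * ‖q‖) ^ 2 ≤ (ε * δ) ^ 2 := by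
      rw [← sq_abs (b * ‖q‖)]
      exact pow_le_pow_left₀ (abs_nonneg _) h1 2
    calc b ^ 2 * ‖q‖ ^ 2 = (b * ‖q‖) ^ 2 := by ring
      _ ≤ (ε * δ) ^ 2 := h2
      _ = ε ^ 2 * δ ^ 2 := by ring
  -- numeric endgame
  have hfin : ‖a • w - v‖ ≤ δ + 2 * ε :=
    endgame _ ‖p‖ ‖q‖ δ ε a b hδ0 hε0 (norm_nonneg _) hawv hPy hQy hPab hbQ
  linarith [key1, hfin]
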